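/- Let G be a connected graph. For every covering of G by k forests (subgraphs without cycles), there exists a covering of G by k trees (connected acyclic subgraphs). -/

import Mathlib

/-- An abstract simplicial complex on a vertex type `V`:
a downward-closed family of nonempty finite sets of vertices. -/
structure AbsSC (V : Type) where
  faces : Set (Finset V)
  nonempty_of_mem : ∀ σ ∈ faces, σ.Nonempty
  down_closed : ∀ σ ∈ faces, ∀ τ : Finset V, τ ⊆ σ → τ.Nonempty → τ ∈ faces

namespace AbsSC

variable {V W V' W' : Type} [DecidableEq V] [DecidableEq W]

/-- `f` is a simplicial map from `K` to `L`. -/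
def IsSimplicial (K : AbsSC V) (L : AbsSC W) (f : V → W) : Prop :=
  ∀ σ ∈ K.faces, σ.image f ∈ L.faces

/-- Two simplicial maps are contiguous. -/
def Contig (K : AbsSC V) (L : AbsSC W) (f g : V → W) : Prop :=
  IsSimplicial K L f ∧ IsSimplicial K L g ∧
    ∀ σ ∈ K.faces, σ.image f ∪ σ.image g ∈ L.faces

/-- Two maps are in the same contiguity class: they are connected by a
finite chain of pairwise contiguous simplicial maps. -/
def ContigClass (K : AbsSC V) (L : AbsSC W) : (V → W) → (V → W) → Prop :=
  Relation.ReflTransGen (Contig K L)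

/-- `U` is a categorical subcomplex of `K`: the inclusion is in the
contiguity class of a constant map onto a vertex of `K`. -/
def Categorical (K U : AbsSC V) : Prop :=
  U.faces ⊆ K.faces ∧ ∃ v : V, {v} ∈ K.faces ∧ ContigClass U K id (fun _ => v)

/-- `K` is covered by `n+1` categorical subcomplexes. -/
def CatCover (K : AbsSC V) (n : ℕ) : Prop :=
  ∃ U : Fin (n + 1) → AbsSC V, (∀ i, Categorical K (U i)) ∧
    ∀ σ ∈ K.faces, ∃ i, σ ∈ (U i).faces

/-- The simplicial Lusternik–Schnirelmann category of `K`. -/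
noncomputable def scat (K : AbsSC V) : ℕ := sInf {n | CatCover K n}

/-- A maximal simplex of `K`. -/
def MaximalFace (K : AbsSC V) (σ : Finset V) : Prop :=
  σ ∈ K.faces ∧ ∀ τ ∈ K.faces, σ ⊆ τ → σ = τ

/-- The vertex `v` is dominated (by some other vertex `v'`). -/
def Dominated (K : AbsSC V) (v : V) : Prop :=
  ∃ v' : V, v' ≠ v ∧ {v} ∈ K.faces ∧ {v'} ∈ K.faces ∧
    ∀ σ : Finset V, MaximalFace K σ → v ∈ σ → v' ∈ σ

/-- A minimal complex: no vertex is dominated. -/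
def Minimal (K : AbsSC V) : Prop := ∀ v : V, ¬ Dominated K v

/-- Deleting (the open star of) a vertex. -/
def delete (K : AbsSC V) (v : V) : AbsSC V where
  faces := {σ ∈ K.faces | v ∉ σ}
  nonempty_of_mem := fun σ h => K.nonempty_of_mem σ h.1
  down_closed := fun σ h τ hτ hne =>
    ⟨K.down_closed σ h.1 τ hτ hne, fun hv => h.2 (hτ hv)⟩

/-- An elementary strong collapse: removal of the open star of a dominated vertex. -/
def ElemStrongCollapse (K L : AbsSC V) : Prop :=
  ∃ v : V, Dominated K v ∧ L = K.delete v

/-- A complex consisting of a single vertex. -/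
def IsPoint (K : AbsSC V) : Prop := ∃ v : V, K.faces = {{v}}

/-- `K` is strongly collapsible: it reduces to a single vertex by a
sequence of elementary strong collapses. -/
def StronglyCollapsible (K : AbsSC V) : Prop :=
  ∃ L : AbsSC V, Relation.ReflTransGen ElemStrongCollapse K L ∧ IsPoint L

/-- `K` is covered by `n+1` subcomplexes, each strongly collapsible in itself. -/
def GCatCover (K : AbsSC V) (n : ℕ) : Prop :=
  ∃ U : Fin (n + 1) → AbsSC V,
    (∀ i, (U i).faces ⊆ K.faces ∧ StronglyCollapsible (U i)) ∧
    ∀ σ ∈ K.faces, ∃ i, σ ∈ (U i).faces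

/-- The geometric simplicial category of `K`. -/
noncomputable def gscat (K : AbsSC V) : ℕ := sInf {n | GCatCover K n}

/-- Strong homotopy equivalence of complexes. -/
def StrongEquiv (K : AbsSC V) (L : AbsSC W) : Prop :=
  ∃ (φ : V → W) (ψ : W → V), IsSimplicial K L φ ∧ IsSimplicial L K ψ ∧
    ContigClass K K (ψ ∘ φ) id ∧ ContigClass L L (φ ∘ ψ) id

/-- The barycentric subdivision: vertices are the simplices of `K`,
simplices are the chains of simplices of `K`. -/
def sd (K : AbsSC V) : AbsSC (Finset V) where
  faces := {S | S.Nonempty ∧ (∀ σ ∈ S, σ ∈ K.faces) ∧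
    ∀ σ ∈ S, ∀ τ ∈ S, σ ⊆ τ ∨ τ ⊆ σ}
  nonempty_of_mem := fun S hS => hS.1
  down_closed := fun S hS T hTS hT =>
    ⟨hT, fun σ hσ => hS.2.1 σ (hTS hσ),
      fun σ hσ τ hτ => hS.2.2 σ (hTS hσ) τ (hTS hτ)⟩

/-- The categorical product of simplicial complexes. -/
def prod (K : AbsSC V) (L : AbsSC W) : AbsSC (V × W) where
  faces := {σ | σ.Nonempty ∧ σ.image Prod.fst ∈ K.faces ∧ σ.image Prod.snd ∈ L.faces}
  nonempty_of_mem := fun σ h => h.1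
  down_closed := fun σ h τ hτ hne =>
    ⟨hne, K.down_closed _ h.2.1 _ (Finset.image_subset_image hτ) (hne.image _),
      L.down_closed _ h.2.2 _ (Finset.image_subset_image hτ) (hne.image _)⟩

/-- The `n`-fold categorical power of `K`. -/
def power (K : AbsSC V) (n : ℕ) : AbsSC (Fin n → V) where
  faces := {σ | σ.Nonempty ∧ ∀ j : Fin n, σ.image (fun f => f j) ∈ K.faces}
  nonempty_of_mem := fun σ h => h.1
  down_closed := by
    intro σ h τ hτ hne
    exact ⟨hne, fun j => K.down_closed _ (h.2 j) _ (Finset.image_subset_image hτ) (hne.image _)⟩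

/-- The `n`-th fat wedge of a pointed complex `(K, v₀)` inside `Kⁿ`. -/
def fatWedge (K : AbsSC V) (n : ℕ) (v₀ : V) : AbsSC (Fin n → V) where
  faces := {σ | σ ∈ (K.power n).faces ∧ ∃ j : Fin n, ∀ f ∈ σ, f j = v₀}
  nonempty_of_mem := fun σ h => (K.power n).nonempty_of_mem σ h.1
  down_closed := fun σ h τ hτ hne =>
    ⟨(K.power n).down_closed σ h.1 τ hτ hne,
      h.2.imp fun j hj f hf => hj f (hτ hf)⟩

/-- The part of a set of vertices of a disjoint union lying in the left factor. -/
noncomputable def sumLeft (σ : Finset (V ⊕ W)) : Finset V :=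
  σ.preimage Sum.inl Sum.inl_injective.injOn

/-- The part of a set of vertices of a disjoint union lying in the right factor. -/
noncomputable def sumRight (σ : Finset (V ⊕ W)) : Finset W :=
  σ.preimage Sum.inr Sum.inr_injective.injOn

/-- The simplicial join `K ∗ L`. -/
def join (K : AbsSC V) (L : AbsSC W) : AbsSC (V ⊕ W) where
  faces := {σ | σ.Nonempty ∧ ((sumLeft σ).Nonempty → sumLeft σ ∈ K.faces) ∧
    ((sumRight σ).Nonempty → sumRight σ ∈ L.faces)}
  nonempty_of_mem := fun σ h => h.1
  down_closed := by
    intro σ h τ hτ hne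
    have hl : sumLeft τ ⊆ sumLeft σ := fun x hx => by
      rw [sumLeft, Finset.mem_preimage] at *; exact hτ hx
    have hr : sumRight τ ⊆ sumRight σ := fun x hx => by
      rw [sumRight, Finset.mem_preimage] at *; exact hτ hx
    exact ⟨hne,
      fun h1 => K.down_closed _ (h.2.1 (h1.mono hl)) _ hl h1,
      fun h1 => L.down_closed _ (h.2.2 (h1.mono hr)) _ hr h1⟩

/-- A graph: a simplicial complex of dimension at most 1. -/
def IsGraph (G : AbsSC V) : Prop := ∀ σ ∈ G.faces, σ.card ≤ 2

/-- A connected (nonempty) complex: any two vertices are joined by an edge path. -/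
def ConnectedG (G : AbsSC V) : Prop :=
  G.faces.Nonempty ∧
    ∀ u v : V, {u} ∈ G.faces → {v} ∈ G.faces →
      ∃ (n : ℕ) (p : Fin (n + 1) → V), p 0 = u ∧ p (Fin.last n) = v ∧
        ∀ i : Fin n, ({p i.castSucc, p i.succ} : Finset V) ∈ G.faces

/-- A cycle of length `n` in a graph: `n ≥ 3` distinct vertices joined cyclically by edges. -/
def IsCycle (G : AbsSC V) (n : ℕ) (p : ZMod n → V) : Prop :=
  3 ≤ n ∧ Function.Injective p ∧
    ∀ i : ZMod n, ({p i, p (i + 1)} : Finset V) ∈ G.faces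

/-- A forest: a graph containing no cycle. -/
def IsForest (G : AbsSC V) : Prop := ∀ (n : ℕ) (p : ZMod n → V), ¬ IsCycle G n p

/-- A tree: a connected forest. -/
def IsTree (G : AbsSC V) : Prop := IsForest G ∧ ConnectedG G

/-- A decomposition of a graph into `k` edge-disjoint spanning forests. -/
def EdgeDisjointForestDecomp (G : AbsSC V) (k : ℕ) : Prop :=
  ∃ F : Fin k → AbsSC V,
    (∀ i, (F i).faces ⊆ G.faces ∧ IsForest (F i) ∧
      ∀ v : V, {v} ∈ G.faces → {v} ∈ (F i).faces) ∧
    (∀ σ ∈ G.faces, ∃ i, σ ∈ (F i).faces) ∧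
    ∀ (i j : Fin k) (σ : Finset V), σ.card = 2 →
      σ ∈ (F i).faces → σ ∈ (F j).faces → i = j

/-- The arboricity of a graph. -/
noncomputable def arboricity (G : AbsSC V) : ℕ :=
  sInf {k | EdgeDisjointForestDecomp G k}

end AbsSC


section ForestTreeAux

open AbsSC

variable {V : Type} [DecidableEq V]

/-- Reachability by edges in a complex. -/
def FTReach (T : AbsSC V) : V → V → Prop :=
  Relation.ReflTransGen (fun a b => ({a, b} : Finset V) ∈ T.faces)

lemma ftreach_symm (T : AbsSC V) : Symmetric (FTReach T) :=
  haveI : Std.Symm (fun a b : V => ({a, b} : Finset V) ∈ T.faces) :=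
    ⟨fun a b h => by rwa [Finset.pair_comm]⟩
  fun a b h => (Relation.ReflTransGen.stdSymm (r := fun a b : V => ({a, b} : Finset V) ∈ T.faces)).symm a b h

lemma ft_cycle_ne {n : ℕ} (hn : 3 ≤ n) (i : ZMod n) : i ≠ i + 1 := by
  intro h
  have h1 : ((1 : ℕ) : ZMod n) = 0 := by
    have := congrArg (· - i) h
    simpa using this.symm
  haveI : NeZero n := ⟨by omega⟩
  have := Nat.le_of_dvd one_pos ((ZMod.natCast_eq_zero_iff 1 n).mp h1)
  omega

/-- Add an edge (with its endpoints) to a complex. -/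
def ftAddE (T : AbsSC V) (a b : V) : AbsSC V where
  faces := T.faces ∪ {σ | σ.Nonempty ∧ σ ⊆ {a, b}}
  nonempty_of_mem := by rintro σ (h | h); exacts [T.nonempty_of_mem σ h, h.1]
  down_closed := by
    rintro σ (h | h) τ hτ hne
    · exact Or.inl (T.down_closed σ h τ hτ hne)
    · exact Or.inr ⟨hne, hτ.trans h.2⟩

lemma ftAddE_forest (T : AbsSC V) (a b : V) (hab : a ≠ b)
    (hnr : ¬ FTReach T a b) (hf : IsForest T) : IsForest (ftAddE T a b) := by
  rintro n p ⟨hn, hinj, hedge⟩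
  haveI : NeZero n := ⟨by omega⟩
  have hne : ∀ i : ZMod n, p i ≠ p (i + 1) := fun i h => ft_cycle_ne hn i (hinj h)
  have key : ∀ i : ZMod n, ({p i, p (i + 1)} : Finset V) ∈ T.faces ∨
      ({p i, p (i + 1)} : Finset V) = {a, b} := by
    intro i
    rcases hedge i with h | h
    · exact Or.inl h
    · refine Or.inr (Finset.eq_of_subset_of_card_le h.2 ?_)
      rw [Finset.card_pair (hne i)]
      exact (Finset.card_insert_le _ _).trans (by simp)
  have hex : ∃ i : ZMod n, ({p i, p (i + 1)} : Finset V) = {a, b} := by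
    by_contra hc
    push_neg at hc
    exact hf n p ⟨hn, hinj, fun i => (key i).resolve_right (hc i)⟩
  obtain ⟨i, hi⟩ := hex
  have huniq : ∀ j : ZMod n, j ≠ i → ({p j, p (j + 1)} : Finset V) ∈ T.faces := by
    intro j hj
    rcases key j with h | h
    · exact h
    · exfalso
      have heq : ({p j, p (j + 1)} : Finset V) = {p i, p (i + 1)} := h.trans hi.symm
      have hj1 : p j ∈ ({p i, p (i + 1)} : Finset V) := by
        rw [← heq]; exact Finset.mem_insert_self _ _
      rcases Finset.mem_insert.mp hj1 with h1 | h1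
      · exact hj (hinj h1)
      · have h1' : j = i + 1 := hinj (Finset.mem_singleton.mp h1)
        have hj2 : p (j + 1) ∈ ({p i, p (i + 1)} : Finset V) := by
          rw [← heq]; exact Finset.mem_insert_of_mem (Finset.mem_singleton_self _)
        rcases Finset.mem_insert.mp hj2 with h2 | h2
        · have hji : j + 1 = i := hinj h2
          have h20 : ((2 : ℕ) : ZMod n) = 0 := by
            have he : i + 1 + 1 = i := by rw [← h1']; exact hji
            push_cast
            linear_combination he
          have := Nat.le_of_dvd two_pos ((ZMod.natCast_eq_zero_iff 2 n).mp h20)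
          omega
        · have : j + 1 = i + 1 := hinj (Finset.mem_singleton.mp h2)
          exact hj (by exact add_right_cancel this)
  -- walk around the cycle avoiding edge i
  have hwalk : ∀ m : ℕ, m + 1 ≤ n → FTReach T (p (i + 1)) (p (i + 1 + (m : ZMod n))) := by
    intro m
    induction m with
    | zero => intro _; simp only [Nat.cast_zero, add_zero]; exact Relation.ReflTransGen.refl
    | succ m ih =>
      intro hm
      have hr := ih (by omega)
      have hjne : i + 1 + (m : ZMod n) ≠ i := by
        intro h
        have h0 : ((1 + m : ℕ) : ZMod n) = 0 := by
          push_cast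
          linear_combination h
        have := Nat.le_of_dvd (by omega) ((ZMod.natCast_eq_zero_iff (1 + m) n).mp h0)
        omega
      have hstep := huniq _ hjne
      have : FTReach T (p (i + 1)) (p (i + 1 + (m : ZMod n) + 1)) :=
        Relation.ReflTransGen.tail hr hstep
      have hcast : i + 1 + ((m + 1 : ℕ) : ZMod n) = i + 1 + (m : ZMod n) + 1 := by
        push_cast; ring
      rwa [hcast]
  have hlast : FTReach T (p (i + 1)) (p i) := by
    have := hwalk (n - 1) (by omega)
    have hc : i + 1 + ((n - 1 : ℕ) : ZMod n) = i := by
      have : ((1 + (n - 1) : ℕ) : ZMod n) = 0 := by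
        have h1 : 1 + (n - 1) = n := by omega
        rw [h1, ZMod.natCast_self]
      push_cast at this
      linear_combination this
    rwa [hc] at this
  have hia : p i ∈ ({a, b} : Finset V) := by
    rw [← hi]; exact Finset.mem_insert_self _ _
  have hib : p (i + 1) ∈ ({a, b} : Finset V) := by
    rw [← hi]; exact Finset.mem_insert_of_mem (Finset.mem_singleton_self _)
  rcases Finset.mem_insert.mp hia with h1 | h1
  · -- p i = a, so p (i+1) = b
    have h2 : p (i + 1) = b := by
      rcases Finset.mem_insert.mp hib with h2 | h2
      · exact absurd (h2.trans h1.symm) (Ne.symm (hne i))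
      · exact Finset.mem_singleton.mp h2
    exact hnr (ftreach_symm T (h2 ▸ h1 ▸ hlast))
  · -- p i = b, so p (i+1) = a
    have h1' : p i = b := Finset.mem_singleton.mp h1
    have h2 : p (i + 1) = a := by
      rcases Finset.mem_insert.mp hib with h2 | h2
      · exact h2
      · exact absurd ((Finset.mem_singleton.mp h2).trans h1'.symm) (Ne.symm (hne i))
    exact hnr (h2 ▸ h1' ▸ hlast)

lemma ft_reach_to_path (T : AbsSC V) (u v : V) (h : FTReach T u v) :
    ∃ (n : ℕ) (p : Fin (n + 1) → V), p 0 = u ∧ p (Fin.last n) = v ∧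
      ∀ i : Fin n, ({p i.castSucc, p i.succ} : Finset V) ∈ T.faces := by
  induction h using Relation.ReflTransGen.head_induction_on with
  | refl => exact ⟨0, fun _ => v, rfl, rfl, fun i => i.elim0⟩
  | @head x c hxc _ ih =>
    obtain ⟨n, p, hp0, hpl, hpe⟩ := ih
    refine ⟨n + 1, Fin.cases x p, by simp, ?_, ?_⟩
    · rw [← Fin.succ_last]
      exact hpl
    · intro i
      induction i using Fin.cases with
      | zero =>
        simp only [Fin.castSucc_zero, Fin.cases_zero, Fin.cases_succ, hp0]
        exact hxc
      | succ j =>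
        have e1 : (j.succ).castSucc = (j.castSucc).succ := (Fin.succ_castSucc j).symm
        rw [e1]
        simp only [Fin.cases_succ]
        exact hpe j

lemma ft_exists_break {n : ℕ} (Q : Fin (n + 1) → Prop) (h0 : Q 0) (hl : ¬ Q (Fin.last n)) :
    ∃ i : Fin n, Q i.castSucc ∧ ¬ Q i.succ := by
  induction n with
  | zero => exact absurd h0 (by simpa using hl)
  | succ n ih =>
    by_cases h1 : Q 1
    · have h1' : Q ((0 : Fin (n + 1)).succ) := by simpa using h1
      obtain ⟨i, hi1, hi2⟩ := ih (fun j => Q j.succ)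
        (by simpa [Fin.succ_zero_eq_one] using h1)
        (fun hq => hl (by
          have hq' : Q ((Fin.last n).succ) := hq
          rwa [Fin.succ_last] at hq'))
      exact ⟨i.succ, by rwa [← Fin.succ_castSucc], hi2⟩
    · exact ⟨0, by simpa using h0, by simpa [Fin.succ_zero_eq_one] using h1⟩

lemma ft_step (G : AbsSC V) (hconn : ConnectedG G) (T : AbsSC V)
    (hTG : T.faces ⊆ G.faces) (hf : IsForest T)
    (hbad : ¬ ∀ u v : V, {u} ∈ T.faces → {v} ∈ T.faces → FTReach T u v) :
    ∃ T' : AbsSC V, T'.faces ⊆ G.faces ∧ IsForest T' ∧ T.faces ⊆ T'.faces ∧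
      ∃ e : Finset V, e ∈ G.faces ∧ e.card = 2 ∧ e ∉ T.faces ∧ e ∈ T'.faces := by
  push_neg at hbad
  obtain ⟨u, v, hu, hv, huv⟩ := hbad
  obtain ⟨n, p, hp0, hpl, hpe⟩ := hconn.2 u v (hTG hu) (hTG hv)
  obtain ⟨i, hi1, hi2⟩ := ft_exists_break (fun j => FTReach T u (p j))
    (by show FTReach T u (p 0); rw [hp0]; exact Relation.ReflTransGen.refl)
    (by show ¬ FTReach T u (p (Fin.last n)); rw [hpl]; exact huv)
  set a := p i.castSucc with ha
  set b := p i.succ with hb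
  have hedgeG : ({a, b} : Finset V) ∈ G.faces := hpe i
  have hab : a ≠ b := by
    intro h
    exact hi2 (h ▸ hi1)
  have hnr : ¬ FTReach T a b := fun h => hi2 (hi1.trans h)
  refine ⟨ftAddE T a b, ?_, ftAddE_forest T a b hab hnr hf, fun σ h => Or.inl h,
    {a, b}, hedgeG, Finset.card_pair hab, ?_, Or.inr ⟨⟨a, Finset.mem_insert_self _ _⟩, le_refl _⟩⟩
  · rintro σ (h | h)
    · exact hTG h
    · exact G.down_closed _ hedgeG σ h.2 h.1
  · intro h
    exact hnr (Relation.ReflTransGen.single h)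

lemma ft_extend (G : AbsSC V) [Fintype V] (hconn : ConnectedG G) :
    ∀ (m : ℕ) (T : AbsSC V),
      {σ : Finset V | σ ∈ G.faces ∧ σ.card = 2 ∧ σ ∉ T.faces}.ncard ≤ m →
      T.faces ⊆ G.faces → IsForest T → (∀ w : V, {w} ∈ G.faces → {w} ∈ T.faces) →
      ∃ T' : AbsSC V, T'.faces ⊆ G.faces ∧ IsTree T' ∧ T.faces ⊆ T'.faces := by
  intro m
  induction m with
  | zero =>
    intro T hm hTG hf hsing
    by_cases hall : ∀ u v : V, {u} ∈ T.faces → {v} ∈ T.faces → FTReach T u v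
    · refine ⟨T, hTG, ⟨hf, ?_, ?_⟩, subset_refl _⟩
      · obtain ⟨σ, hσ⟩ := hconn.1
        obtain ⟨w, hw⟩ := G.nonempty_of_mem σ hσ
        have : ({w} : Finset V) ∈ G.faces :=
          G.down_closed σ hσ {w} (Finset.singleton_subset_iff.mpr hw) (Finset.singleton_nonempty w)
        exact ⟨{w}, hsing w this⟩
      · intro u v hu hv
        exact ft_reach_to_path T u v (hall u v hu hv)
    · exfalso
      obtain ⟨T', _, _, hsub, e, heG, hec, heT, _⟩ := ft_step G hconn T hTG hf hall
      have : e ∈ {σ : Finset V | σ ∈ G.faces ∧ σ.card = 2 ∧ σ ∉ T.faces} := ⟨heG, hec, heT⟩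
      have hpos : 0 < {σ : Finset V | σ ∈ G.faces ∧ σ.card = 2 ∧ σ ∉ T.faces}.ncard :=
        Set.ncard_pos (Set.toFinite _) |>.mpr ⟨e, this⟩
      omega
  | succ m ih =>
    intro T hm hTG hf hsing
    by_cases hall : ∀ u v : V, {u} ∈ T.faces → {v} ∈ T.faces → FTReach T u v
    · refine ⟨T, hTG, ⟨hf, ?_, ?_⟩, subset_refl _⟩
      · obtain ⟨σ, hσ⟩ := hconn.1
        obtain ⟨w, hw⟩ := G.nonempty_of_mem σ hσ
        have : ({w} : Finset V) ∈ G.faces :=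
          G.down_closed σ hσ {w} (Finset.singleton_subset_iff.mpr hw) (Finset.singleton_nonempty w)
        exact ⟨{w}, hsing w this⟩
      · intro u v hu hv
        exact ft_reach_to_path T u v (hall u v hu hv)
    · obtain ⟨T', hT'G, hT'f, hsub, e, heG, hec, heT, heT'⟩ := ft_step G hconn T hTG hf hall
      have hss : {σ : Finset V | σ ∈ G.faces ∧ σ.card = 2 ∧ σ ∉ T'.faces} ⊂
          {σ : Finset V | σ ∈ G.faces ∧ σ.card = 2 ∧ σ ∉ T.faces} := by
        constructor
        · rintro σ ⟨h1, h2, h3⟩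
          exact ⟨h1, h2, fun h => h3 (hsub h)⟩
        · intro h
          exact (h ⟨heG, hec, heT⟩).2.2 heT'
      have hlt := Set.ncard_lt_ncard hss (Set.toFinite _)
      obtain ⟨T'', h1, h2, h3⟩ := ih T' (by omega) hT'G hT'f
        (fun w hw => hsub (hsing w hw))
      exact ⟨T'', h1, h2, hsub.trans h3⟩

/-- Add all singletons of `G` to a complex. -/
def ftAddSings (G F : AbsSC V) : AbsSC V where
  faces := F.faces ∪ {σ | ∃ w : V, σ = {w} ∧ ({w} : Finset V) ∈ G.faces}
  nonempty_of_mem := by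
    rintro σ (h | ⟨w, rfl, _⟩)
    · exact F.nonempty_of_mem σ h
    · exact ⟨w, Finset.mem_singleton_self w⟩
  down_closed := by
    rintro σ (h | ⟨w, rfl, hw⟩) τ hτ hne
    · exact Or.inl (F.down_closed σ h τ hτ hne)
    · right
      rcases Finset.subset_singleton_iff.mp hτ with rfl | rfl
      · exact absurd hne (by simp)
      · exact ⟨w, rfl, hw⟩

end ForestTreeAux

/-- any cover of a connected graph by `k` forests can be
upgraded to a cover by `k` trees. -/
theorem forest_cover_to_tree_cover {V : Type} [DecidableEq V] [Fintype V]
    (G : AbsSC V) (hG : AbsSC.IsGraph G) (hconn : AbsSC.ConnectedG G)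
    (k : ℕ) (F : Fin k → AbsSC V) (hsub : ∀ i, (F i).faces ⊆ G.faces)
    (hforest : ∀ i, AbsSC.IsForest (F i))
    (hcover : ∀ σ ∈ G.faces, ∃ i, σ ∈ (F i).faces) :
    ∃ T : Fin k → AbsSC V,
      (∀ i, (T i).faces ⊆ G.faces ∧ AbsSC.IsTree (T i)) ∧
      ∀ σ ∈ G.faces, ∃ i, σ ∈ (T i).faces := by
  classical
  have htrees : ∀ i : Fin k, ∃ T : AbsSC V,
      T.faces ⊆ G.faces ∧ AbsSC.IsTree T ∧ (F i).faces ⊆ T.faces := by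
    intro i
    set T0 := ftAddSings G (F i) with hT0
    have hT0G : T0.faces ⊆ G.faces := by
      rintro σ (h | ⟨w, rfl, hw⟩)
      · exact hsub i h
      · exact hw
    have hT0f : AbsSC.IsForest T0 := by
      rintro n p ⟨hn, hinj, hedge⟩
      refine hforest i n p ⟨hn, hinj, fun j => ?_⟩
      have hne : p j ≠ p (j + 1) := fun h => ft_cycle_ne hn j (hinj h)
      rcases hedge j with h | ⟨w, hw, _⟩
      · exact h
      · exfalso
        have := congrArg Finset.card hw
        rw [Finset.card_pair hne, Finset.card_singleton] at this
        omega
    have hT0s : ∀ w : V, ({w} : Finset V) ∈ G.faces → ({w} : Finset V) ∈ T0.faces :=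
      fun w hw => Or.inr ⟨w, rfl, hw⟩
    obtain ⟨T, h1, h2, h3⟩ := ft_extend G hconn
      ({σ : Finset V | σ ∈ G.faces ∧ σ.card = 2 ∧ σ ∉ T0.faces}.ncard) T0 (le_refl _)
      hT0G hT0f hT0s
    exact ⟨T, h1, h2, fun σ h => h3 (Or.inl h)⟩
  choose T hT1 hT2 hT3 using htrees
  refine ⟨T, fun i => ⟨hT1 i, hT2 i⟩, fun σ hσ => ?_⟩
  obtain ⟨i, hi⟩ := hcover σ hσ
  exact ⟨i, hT3 i hi⟩
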